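/- Let β ∈ (1,2) with β^m = β^{m−1}+⋯+β+1 for an integer m ≥ 2, b ∈ [0, 1/(β−1) − 1), and T the piecewise map with branches T_0, T_1 and breakpoint (b+1)/β. The density h(x) = Σ_{n=0}^{m−1} β^{−n}(𝟙_{[0,T^n(b+1)]}(x) − 𝟙_{[0,T^n(b)]}(x)) satisfies ∫_0^{(b+1)/β} h dx = 1 − (m−1)b and ∫_0^{1/(β−1)} h dx = (mβ + β − 2m)/(β − 1), so that the normalized measure gives mass p = (β−1)(1−(m−1)b)/(mβ+β−2m) to [0,(b+1)/β). -/

import Mathlib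

open MeasureTheory

lemma indInt (a x y : ℝ) : IntervalIntegrable ((Set.Icc (0:ℝ) a).indicator (fun _ => (1:ℝ))) volume x y := by
  apply MeasureTheory.Integrable.intervalIntegrable
  rw [MeasureTheory.integrable_indicator_iff measurableSet_Icc]
  exact integrableOn_const measure_Icc_lt_top.ne

lemma indIntegral (a c : ℝ) (ha : 0 ≤ a) (hc : 0 ≤ c) :
    (∫ x in (0:ℝ)..c, (Set.Icc 0 a).indicator (fun _ => (1:ℝ)) x) = min a c := by
  rw [intervalIntegral.integral_of_le hc,
    MeasureTheory.setIntegral_indicator measurableSet_Icc]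
  have hset : Set.Ioc (0:ℝ) c ∩ Set.Icc 0 a = Set.Ioc 0 (min c a) := by
    ext x
    simp only [Set.mem_inter_iff, Set.mem_Ioc, Set.mem_Icc, lt_min_iff, le_min_iff]
    constructor
    · rintro ⟨⟨h1, h2⟩, _, h4⟩; exact ⟨h1, h2, h4⟩
    · rintro ⟨h1, h2, h3⟩; exact ⟨⟨h1, h2⟩, le_of_lt h1, h3⟩
  rw [hset]
  simp [Real.volume_Ioc, ENNReal.toReal_ofReal (le_min hc ha), min_comm]
  exact ⟨ha, hc⟩

theorem stmt18 (β : ℝ) (m : ℕ) (hm : 2 ≤ m) (hβ : β ∈ Set.Ioo (1 : ℝ) 2)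
    (hpg : β ^ m = ∑ i ∈ Finset.range m, β ^ i)
    (b : ℝ) (hb : b ∈ Set.Ico 0 (1 / (β - 1) - 1))
    (T : ℝ → ℝ) (hT : ∀ x, T x = if x < (b + 1) / β then β * x else β * x - 1)
    (h : ℝ → ℝ)
    (hh : ∀ x, h x = ∑ n ∈ Finset.range m,
      ((Set.Icc (0 : ℝ) (T^[n] (b + 1))).indicator (fun _ => (1 : ℝ)) x -
        (Set.Icc (0 : ℝ) (T^[n] b)).indicator (fun _ => (1 : ℝ)) x) / β ^ n) :
    (∫ x in (0 : ℝ)..((b + 1) / β), h x) = 1 - ((m : ℝ) - 1) * b ∧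
    (∫ x in (0 : ℝ)..(1 / (β - 1)), h x) = ((m : ℝ) * β + β - 2 * m) / (β - 1) ∧
    (∫ x in (0 : ℝ)..((b + 1) / β), h x) / (∫ x in (0 : ℝ)..(1 / (β - 1)), h x) =
      (β - 1) * (1 - ((m : ℝ) - 1) * b) / ((m : ℝ) * β + β - 2 * m) := by
  obtain ⟨hβ1, hβ2⟩ := hβ
  obtain ⟨hb0, hb1⟩ := hb
  have hβ0 : (0:ℝ) < β := by linarith
  have hβne : β ≠ 0 := ne_of_gt hβ0
  have hβm1 : (0:ℝ) < β - 1 := by linarith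
  have hβm1ne : β - 1 ≠ 0 := ne_of_gt hβm1
  have hg := geom_sum_mul β m
  rw [← hpg] at hg
  have hkey : β ^ m * (2 - β) = 1 := by linear_combination -hg
  have hP0 : (0:ℝ) < β ^ m := pow_pos hβ0 m
  have hbb : (b + 1) * (β - 1) < 1 := by
    have h1 : b + 1 < 1 / (β - 1) := by linarith
    calc (b + 1) * (β - 1) < (1 / (β - 1)) * (β - 1) :=
          mul_lt_mul_of_pos_right h1 hβm1
      _ = 1 := by field_simp
  have hbm : b * (β ^ m - 1) < 1 := by
    have hA : b * (β - 1) < 2 - β := by nlinarith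
    calc b * (β ^ m - 1) = (b * (β - 1)) * β ^ m := by linear_combination b * hkey
      _ < (2 - β) * β ^ m := mul_lt_mul_of_pos_right hA hP0
      _ = 1 := by linear_combination hkey
  have hblt : ∀ n, n < m → β ^ n * b < (b + 1) / β := by
    intro n hn
    rw [lt_div_iff₀ hβ0]
    have h1 : β ^ (n + 1) ≤ β ^ m := pow_le_pow_right₀ hβ1.le hn
    nlinarith [mul_nonneg hb0 (sub_nonneg.mpr h1), pow_succ β n]
  have Tb : ∀ n, n < m → T^[n] b = β ^ n * b := by
    intro n
    induction n with
    | zero => intro _; simp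
    | succ k ih =>
      intro hn
      have hk : k < m := Nat.lt_of_succ_lt hn
      rw [Function.iterate_succ_apply', ih hk, hT, if_pos (hblt k hk)]
      ring
  have hgs : ∀ n : ℕ, ∑ k ∈ Finset.range n, β ^ k = (β ^ n - 1) / (β - 1) :=
    fun n => geom_sum_eq hβ1.ne' n
  have uA : ∀ n, n < m → (b + 1) / β ≤ β ^ n * (b + 1) - (β ^ n - 1) / (β - 1) := by
    intro n hn
    have hle : β ^ (n + 1) ≤ β ^ m := pow_le_pow_right₀ hβ1.le hn
    have h1 : β ^ n * β * (2 - β) ≤ 1 := by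
      rw [← pow_succ]
      calc β ^ (n+1) * (2 - β) ≤ β ^ m * (2 - β) :=
            mul_le_mul_of_nonneg_right hle (by linarith)
        _ = 1 := hkey
    have hP1 : (1:ℝ) ≤ β ^ n := one_le_pow₀ hβ1.le
    have hPβ : (1:ℝ) ≤ β ^ n * β := by nlinarith
    have expand : β ^ n * (b + 1) - (β ^ n - 1) / (β - 1)
        = (β ^ n * (b + 1) * (β - 1) - (β ^ n - 1)) / (β - 1) := by
      field_simp
    rw [expand, div_le_div_iff₀ hβ0 hβm1]
    nlinarith [mul_nonneg (mul_nonneg hb0 hβm1.le) (sub_nonneg.mpr hPβ)]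
  have uC : ∀ n, n < m → β ^ n * (b + 1) - (β ^ n - 1) / (β - 1) ≤ 1 / (β - 1) := by
    intro n hn
    have hPn : (0:ℝ) < β ^ n := pow_pos hβ0 n
    have expand : β ^ n * (b + 1) - (β ^ n - 1) / (β - 1)
        = (β ^ n * (b + 1) * (β - 1) - (β ^ n - 1)) / (β - 1) := by
      field_simp
    rw [expand, div_le_div_iff₀ hβm1 hβm1]
    nlinarith [mul_lt_mul_of_pos_left hbb hPn]
  have Tb1 : ∀ n, n < m → T^[n] (b + 1) = β ^ n * (b + 1) - ∑ k ∈ Finset.range n, β ^ k := by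
    intro n
    induction n with
    | zero => intro _; simp
    | succ k ih =>
      intro hn
      have hk : k < m := Nat.lt_of_succ_lt hn
      have hge : (b + 1) / β ≤ β ^ k * (b + 1) - ∑ j ∈ Finset.range k, β ^ j := by
        rw [hgs]; exact uA k hk
      rw [Function.iterate_succ_apply', ih hk, hT, if_neg (not_lt.mpr hge)]
      have hms : ∑ j ∈ Finset.range k, β ^ (j + 1) = β * ∑ j ∈ Finset.range k, β ^ j := by
        rw [Finset.mul_sum]
        exact Finset.sum_congr rfl (fun j _ => by ring)
      rw [Finset.sum_range_succ', hms]
      ring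
  have hc1 : (0:ℝ) ≤ (b + 1) / β := by positivity
  have hc2 : (0:ℝ) ≤ 1 / (β - 1) := by positivity
  have hI : ∀ c : ℝ, 0 ≤ c → (∫ x in (0:ℝ)..c, h x)
      = ∑ n ∈ Finset.range m, (min (T^[n] (b + 1)) c - min (T^[n] b) c) / β ^ n := by
    intro c hc
    simp only [hh]
    rw [intervalIntegral.integral_finset_sum
      (fun n _ => ((indInt _ 0 c).sub (indInt _ 0 c)).div_const _)]
    refine Finset.sum_congr rfl (fun n hn => ?_)
    rw [Finset.mem_range] at hn
    have ha1 : 0 ≤ T^[n] (b + 1) := by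
      rw [Tb1 n hn, hgs]; linarith [uA n hn, hc1]
    have ha2 : 0 ≤ T^[n] b := by rw [Tb n hn]; positivity
    rw [intervalIntegral.integral_div,
      intervalIntegral.integral_sub (indInt _ 0 c) (indInt _ 0 c),
      indIntegral _ _ ha1 hc, indIntegral _ _ ha2 hc]
  have hS : ∑ n ∈ Finset.range m, (β⁻¹) ^ n = β := by
    have hinv1 : β⁻¹ ≠ 1 := by
      rw [ne_eq, inv_eq_one]; exact hβ1.ne'
    rw [geom_sum_eq hinv1]
    have hm0 : β ^ m ≠ 0 := pow_ne_zero _ hβne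
    have h2 : (β⁻¹) ^ m = 2 - β := by
      rw [inv_pow]
      field_simp
      linear_combination -hkey
    rw [h2]
    have hinvne : β⁻¹ - 1 ≠ 0 := by
      have : β⁻¹ < 1 := by
        rw [inv_lt_one_iff₀]; right; exact hβ1
      linarith
    rw [div_eq_iff hinvne, mul_sub, mul_inv_cancel₀ hβne]
    ring
  have I1 : (∫ x in (0:ℝ)..((b + 1) / β), h x) = 1 - ((m : ℝ) - 1) * b := by
    rw [hI _ hc1]
    have step : ∀ n ∈ Finset.range m,
        (min (T^[n] (b + 1)) ((b + 1) / β) - min (T^[n] b) ((b + 1) / β)) / β ^ n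
        = ((b + 1) / β) * (β⁻¹) ^ n - b := by
      intro n hn
      rw [Finset.mem_range] at hn
      have hmin1 : min (T^[n] (b + 1)) ((b + 1) / β) = (b + 1) / β := by
        rw [Tb1 n hn, hgs]; exact min_eq_right (uA n hn)
      have hmin2 : min (T^[n] b) ((b + 1) / β) = β ^ n * b := by
        rw [Tb n hn]; exact min_eq_left (hblt n hn).le
      have hPn : β ^ n ≠ 0 := pow_ne_zero _ hβne
      rw [hmin1, hmin2, inv_pow]
      field_simp
    rw [Finset.sum_congr rfl step, Finset.sum_sub_distrib, ← Finset.mul_sum, hS,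
      Finset.sum_const, Finset.card_range, nsmul_eq_mul]
    field_simp
    ring
  have I2 : (∫ x in (0:ℝ)..(1 / (β - 1)), h x) = ((m : ℝ) * β + β - 2 * m) / (β - 1) := by
    rw [hI _ hc2]
    have step : ∀ n ∈ Finset.range m,
        (min (T^[n] (b + 1)) (1 / (β - 1)) - min (T^[n] b) (1 / (β - 1))) / β ^ n
        = (1 - (β - 1)⁻¹) + (β⁻¹) ^ n * (β - 1)⁻¹ := by
      intro n hn
      rw [Finset.mem_range] at hn
      have hmin1 : min (T^[n] (b + 1)) (1 / (β - 1))
          = β ^ n * (b + 1) - (β ^ n - 1) / (β - 1) := by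
        rw [Tb1 n hn, hgs]; exact min_eq_left (uC n hn)
      have hmin2 : min (T^[n] b) (1 / (β - 1)) = β ^ n * b := by
        rw [Tb n hn]
        refine min_eq_left ?_
        have h1 := hblt n hn
        have hd : (b + 1) / β ≤ b + 1 := div_le_self (by linarith) hβ1.le
        linarith
      have hPn : β ^ n ≠ 0 := pow_ne_zero _ hβne
      rw [hmin1, hmin2, inv_pow]
      field_simp
      ring
    rw [Finset.sum_congr rfl step, Finset.sum_add_distrib, Finset.sum_const,
      Finset.card_range, nsmul_eq_mul, ← Finset.sum_mul, hS]
    field_simp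
    ring
  refine ⟨I1, I2, ?_⟩
  rw [I1, I2, div_div_eq_mul_div]
  ring
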